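/- For the class H = {h_{i,j}} on ℕ×ℕ (h_{i,j}(x)=1 iff x=(i,k) with k ≤ j) and the perturbation type U with U((i,0)) = {(i,0)} ∪ {(i,k) : T_i does not halt within k steps on empty input} and U((i,j)) = {(i,j),(i,0)} if T_i does not halt within j steps else {(i,j)} (j > 0), the robust loss ℓ^U is computably evaluable on H: the function (i,j,x,y) ↦ ℓ^U(h_{i,j},x,y) is total computable. -/

import Mathlib

open Nat.Partrec (Code)

/-- `T_i` halts within `k` steps on the empty input, for the standard enumeration of
Turing machines via `Nat.Partrec.Code` and its step-bounded evaluation `evaln`. -/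
def haltsWithin (i k : ℕ) : Prop :=
  (Nat.Partrec.Code.evaln k (Denumerable.ofNat Code i) 0).isSome = true

instance (i k : ℕ) : Decidable (haltsWithin i k) := by
  unfold haltsWithin; infer_instance

/-- The row-initial-segment hypothesis `h_{i,j}` on `ℕ × ℕ`:
`h_{i,j}(x) = 1` iff `x = (i,k)` with `k ≤ j`. -/
def hRow (i j : ℕ) (x : ℕ × ℕ) : Bool := decide (x.1 = i ∧ x.2 ≤ j)

/-- The step-counting perturbation type of Theorem 4.4:
`U((i,0)) = {(i,0)} ∪ {(i,k) : T_i does not halt within k steps}` and, for `j > 0`,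
`U((i,j)) = {(i,j),(i,0)}` if `T_i` does not halt within `j` steps, else `{(i,j)}`. -/
def Ustep : ℕ × ℕ → Set (ℕ × ℕ)
  | (i, 0) => {(i, 0)} ∪ {q | ∃ k, q = (i, k) ∧ ¬ haltsWithin i k}
  | (i, j + 1) =>
    if haltsWithin i (j + 1) then {(i, j + 1)} else {(i, j + 1), (i, 0)}

/-- The robust loss of hypothesis `f` on `(x,y)` with respect to `U`. -/
def RobLoss {α : Type*} (U : α → Set α) (f : α → Bool) (x : α) (y : Bool) : Prop :=
  ∃ z ∈ U x, f z ≠ y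


/-- Halting within a step bound is monotone in the bound. -/
lemma haltsWithin_mono {i k k' : ℕ} (h : k ≤ k') (hk : haltsWithin i k) :
    haltsWithin i k' := by
  unfold haltsWithin at *
  rcases Option.isSome_iff_exists.mp hk with ⟨x, hx⟩
  exact Option.isSome_iff_exists.mpr ⟨x, Nat.Partrec.Code.evaln_mono h hx⟩

/-- Boolean version of `haltsWithin`. -/
def hw (i k : ℕ) : Bool :=
  (Nat.Partrec.Code.evaln k (Denumerable.ofNat Code i) 0).isSome

lemma hw_eq_true_iff {i k : ℕ} : hw i k = true ↔ haltsWithin i k := Iff.rfl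

lemma hw_primrec : Primrec₂ hw :=
  Primrec.option_isSome.comp
    (Nat.Partrec.Code.primrec_evaln.comp
      ((Primrec.snd.pair ((Primrec.ofNat Code).comp Primrec.fst)).pair (Primrec.const 0)))

/-- The explicit decision procedure for the robust loss. -/
def Ldec (p : ℕ × ℕ × (ℕ × ℕ) × Bool) : Bool :=
  if p.2.2.1.2 = 0 then
    if p.2.2.1.1 = p.1 then
      (if p.2.2.2 = true then !hw p.1 (p.2.1 + 1) else true)
    else p.2.2.2
  else
    if hw p.2.2.1.1 p.2.2.1.2 = true then
      decide (hRow p.1 p.2.1 p.2.2.1 ≠ p.2.2.2)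
    else
      decide (hRow p.1 p.2.1 p.2.2.1 ≠ p.2.2.2) ||
        decide (hRow p.1 p.2.1 (p.2.2.1.1, 0) ≠ p.2.2.2)

lemma Ldec_primrec : Primrec Ldec := by
  have pi : Primrec fun p : ℕ × ℕ × (ℕ × ℕ) × Bool => p.1 := Primrec.fst
  have pj : Primrec fun p : ℕ × ℕ × (ℕ × ℕ) × Bool => p.2.1 :=
    Primrec.fst.comp Primrec.snd
  have px : Primrec fun p : ℕ × ℕ × (ℕ × ℕ) × Bool => p.2.2.1 :=
    Primrec.fst.comp (Primrec.snd.comp Primrec.snd)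
  have pa : Primrec fun p : ℕ × ℕ × (ℕ × ℕ) × Bool => p.2.2.1.1 :=
    Primrec.fst.comp px
  have pb : Primrec fun p : ℕ × ℕ × (ℕ × ℕ) × Bool => p.2.2.1.2 :=
    Primrec.snd.comp px
  have py : Primrec fun p : ℕ × ℕ × (ℕ × ℕ) × Bool => p.2.2.2 :=
    Primrec.snd.comp (Primrec.snd.comp Primrec.snd)
  have hRowP : ∀ {f g : ℕ × ℕ × (ℕ × ℕ) × Bool → ℕ}
      {h : ℕ × ℕ × (ℕ × ℕ) × Bool → ℕ × ℕ}, Primrec f → Primrec g → Primrec h →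
      Primrec fun p => hRow (f p) (g p) (h p) := by
    intro f g h hf hg hh
    have : PrimrecPred fun p : ℕ × ℕ × (ℕ × ℕ) × Bool =>
        ((h p).1 = f p ∧ (h p).2 ≤ g p) :=
      PrimrecPred.and (Primrec.eq.comp (Primrec.fst.comp hh) hf)
        (Primrec.nat_le.comp (Primrec.snd.comp hh) hg)
    exact this.decide.of_eq fun p => by simp [hRow]
  have bne : ∀ {f g : ℕ × ℕ × (ℕ × ℕ) × Bool → Bool}, Primrec f → Primrec g →
      Primrec fun p => decide (f p ≠ g p) := by
    intro f g hf hg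
    exact (PrimrecPred.not (Primrec.eq.comp hf hg)).decide
  have bnot : Primrec Bool.not := Primrec.dom_bool _
  unfold Ldec
  refine Primrec.ite (Primrec.eq.comp pb (Primrec.const 0)) ?_ ?_
  · refine Primrec.ite (Primrec.eq.comp pa pi) ?_ py
    refine Primrec.ite (Primrec.eq.comp py (Primrec.const true)) ?_ (Primrec.const true)
    exact bnot.comp (hw_primrec.comp pi (Primrec.nat_add.comp pj (Primrec.const 1)))
  · refine Primrec.ite (Primrec.eq.comp (hw_primrec.comp pa pb) (Primrec.const true)) ?_ ?_
    · exact bne (hRowP pi pj px) py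
    · exact (Primrec.cond (bne (hRowP pi pj px) py)
        (Primrec.const true)
        (bne (hRowP pi pj (pa.pair (Primrec.const 0))) py)).of_eq fun p => by
          cases hh : (decide (hRow p.1 p.2.1 p.2.2.1 ≠ p.2.2.2)) <;> simp [hh]

/-- For the class `H = {h_{i,j}}` and the step-counting perturbation type `U`,
the robust loss `ℓ^U` is computably evaluable on `H`: the function
`(i,j,x,y) ↦ ℓ^U(h_{i,j},x,y)` is total computable. -/
theorem robust_loss_computably_evaluable :
    ∃ L : ℕ × ℕ × (ℕ × ℕ) × Bool → Bool, Computable L ∧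
      ∀ (i j : ℕ) (x : ℕ × ℕ) (y : Bool),
        L (i, j, x, y) = true ↔ RobLoss Ustep (hRow i j) x y := by
  refine ⟨Ldec, Ldec_primrec.to_comp, ?_⟩
  rintro i j ⟨a, b⟩ y
  match b with
  | 0 =>
    have hL : Ldec (i, j, (a, 0), y) =
        (if a = i then (if y = true then !hw i (j + 1) else true) else y) := by
      simp [Ldec]
    rw [hL]
    by_cases hai : a = i
    · subst hai
      cases y with
      | false =>
        rw [show (if a = a then if false = true then !hw a (j + 1) else true else false)
          = true by simp]
        constructor
        · intro _
          exact ⟨(a, 0), Or.inl rfl, by simp [hRow]⟩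
        · intro _; rfl
      | true =>
        rw [show (if a = a then if true = true then !hw a (j + 1) else true else true)
          = !hw a (j + 1) by simp, Bool.not_eq_true',
          show (hw a (j + 1) = false) ↔ ¬ haltsWithin a (j + 1) by
            rw [← hw_eq_true_iff]; simp]
        constructor
        · intro hna
          exact ⟨(a, j + 1), Or.inr ⟨j + 1, rfl, hna⟩, by simp [hRow]⟩
        · rintro ⟨z, hz, hfz⟩ hh
          rcases hz with hz | ⟨k, rfl, hk⟩
          · subst hz; simp [hRow] at hfz
          · apply hk
            simp [hRow] at hfz
            exact haltsWithin_mono hfz hh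
    · rw [if_neg hai]
      constructor
      · intro hy
        exact ⟨(a, 0), Or.inl rfl, by simp [hRow, hai, hy]⟩
      · rintro ⟨z, hz, hfz⟩
        have hz1 : z.1 = a := by
          rcases hz with hz | ⟨k, rfl, _⟩
          · subst hz; rfl
          · rfl
        have : hRow i j z = false := by simp [hRow, hz1, hai]
        rw [this] at hfz
        cases y
        · exact absurd rfl hfz
        · rfl
  | Nat.succ k =>
    by_cases hhalt : haltsWithin a (k + 1)
    · have hL : Ldec (i, j, (a, k + 1), y) = decide (hRow i j (a, k + 1) ≠ y) := by
        simp only [Ldec]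
        rw [if_neg (by simp), if_pos (hw_eq_true_iff.mpr hhalt)]
      rw [hL]
      simp only [RobLoss, Ustep, if_pos hhalt, decide_eq_true_eq]
      constructor
      · intro h
        exact ⟨(a, k + 1), rfl, h⟩
      · rintro ⟨z, hz, hfz⟩
        rw [Set.mem_singleton_iff] at hz
        subst hz; exact hfz
    · have hL : Ldec (i, j, (a, k + 1), y) =
          (decide (hRow i j (a, k + 1) ≠ y) || decide (hRow i j (a, 0) ≠ y)) := by
        simp only [Ldec]
        rw [if_neg (by simp), if_neg (by rw [hw_eq_true_iff]; exact hhalt)]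
      rw [hL]
      simp only [RobLoss, Ustep, if_neg hhalt, Bool.or_eq_true, decide_eq_true_eq]
      constructor
      · rintro (h | h)
        · exact ⟨(a, k + 1), Or.inl rfl, h⟩
        · exact ⟨(a, 0), Or.inr rfl, h⟩
      · rintro ⟨z, hz, hfz⟩
        rcases hz with hz | hz
        · subst hz; exact Or.inl hfz
        · rw [Set.mem_singleton_iff] at hz; subst hz; exact Or.inr hfz
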